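/- Fix real β in the interval [2, φ²] where φ = (1+√5)/2, and set α = log(β/2)/log(φ²/2), so α ∈ [0,1] and β = 2·(φ²/2)^α. Define p_n = ⌊αn⌋ and s_n = n − p_n. Then the limit as n → ∞ of (2^{s_n−1}·(s_n·F(2p_n−1) + 2·F(2p_n)))^{1/n} equals β. -/

import Mathlib

open Filter Real

private lemma gold_pow_le_fib_aux (m : ℕ) :
    goldenRatio ^ m ≤ (Nat.fib (m + 2) : ℝ) := by
  have h := goldenRatio_mul_fib_succ_add_fib (m + 1)
  have hfib : (Nat.fib (m + 1) : ℝ) ≤ (Nat.fib (m + 2) : ℝ) := by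
    exact_mod_cast Nat.fib_le_fib_succ
  have key : goldenRatio ^ m * goldenRatio ^ 2 ≤ (Nat.fib (m + 2) : ℝ) * goldenRatio ^ 2 := by
    rw [← pow_add, goldenRatio_sq]
    nlinarith [h]
  exact le_of_mul_le_mul_right key (by positivity)

private lemma fib_le_gold_pow_aux (m : ℕ) :
    (Nat.fib (m + 1) : ℝ) ≤ goldenRatio ^ m := by
  have h := goldenRatio_mul_fib_succ_add_fib m
  have hfm : (0:ℝ) ≤ (Nat.fib m : ℝ) := Nat.cast_nonneg _
  have h2 : goldenRatio * (Nat.fib (m + 1) : ℝ) ≤ goldenRatio * goldenRatio ^ m := by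
    have e : goldenRatio ^ (m + 1) = goldenRatio * goldenRatio ^ m := by ring
    nlinarith [h]
  exact le_of_mul_le_mul_left h2 goldenRatio_pos

theorem coconut_root_limit (β : ℝ)
    (hβ : β ∈ Set.Icc 2 (((1 + Real.sqrt 5) / 2) ^ 2)) :
    let φ : ℝ := (1 + Real.sqrt 5) / 2
    let α : ℝ := Real.log (β / 2) / Real.log (φ^2 / 2)
    let p : ℕ → ℕ := fun n => min (max 1 ⌊α * n⌋₊) (n - 1)
    let s : ℕ → ℕ := fun n => n - p n
    Filter.Tendsto
      (fun n : ℕ =>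
        ((2^(s n - 1) * (s n * Nat.fib (2 * p n - 1) + 2 * Nat.fib (2 * p n)) : ℕ) : ℝ)
          ^ ((1 : ℝ) / n))
      Filter.atTop (nhds β) := by
  intro φ α p s
  obtain ⟨hβ2, hβφ⟩ := hβ
  have hφg : φ = goldenRatio := rfl
  have hφ1 : (1:ℝ) < φ := by rw [hφg]; exact one_lt_goldenRatio
  have hφ0 : (0:ℝ) < φ := by linarith
  have hφsq : φ ^ 2 = φ + 1 := by rw [hφg]; exact goldenRatio_sq
  have hφ2 : (2:ℝ) < φ ^ 2 := by nlinarith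
  have hβpos : (0:ℝ) < β := by linarith
  have hlogd : 0 < Real.log (φ ^ 2 / 2) := Real.log_pos (by linarith)
  have hα0 : 0 ≤ α := div_nonneg (Real.log_nonneg (by linarith)) hlogd.le
  have hβφ' : β ≤ φ ^ 2 := hβφ
  have hα1 : α ≤ 1 := by
    rw [div_le_one hlogd]
    exact Real.log_le_log (by linarith) (by linarith)
  have hαlog : α * Real.log (φ ^ 2 / 2) = Real.log (β / 2) :=
    div_mul_cancel₀ _ hlogd.ne'
  have e1 : Real.log (β / 2) = Real.log β - Real.log 2 :=
    Real.log_div hβpos.ne' two_ne_zero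
  have e2 : Real.log (φ ^ 2 / 2) = 2 * Real.log φ - Real.log 2 := by
    rw [Real.log_div (by positivity) two_ne_zero, Real.log_pow]
    push_cast; ring
  have hlogβ : Real.log β = (1 - α) * Real.log 2 + (2 * α) * Real.log φ := by
    rw [e1, e2] at hαlog
    linear_combination -hαlog
  -- bounds on p
  have hp_ub : ∀ n : ℕ, (p n : ℝ) ≤ α * n + 1 := by
    intro n
    have h1 : p n ≤ max 1 ⌊α * (n:ℝ)⌋₊ := min_le_left _ _
    have hf : (⌊α * (n:ℝ)⌋₊ : ℝ) ≤ α * n := Nat.floor_le (by positivity)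
    have hαn : (0:ℝ) ≤ α * n := by positivity
    have h2 : ((max 1 ⌊α * (n:ℝ)⌋₊ : ℕ) : ℝ) ≤ α * n + 1 := by
      rw [Nat.cast_max]
      apply max_le
      · push_cast; linarith
      · linarith
    calc (p n : ℝ) ≤ ((max 1 ⌊α * (n:ℝ)⌋₊ : ℕ) : ℝ) := by exact_mod_cast h1
      _ ≤ α * n + 1 := h2
  have hp_lb : ∀ n : ℕ, 1 ≤ n → α * n - 1 ≤ (p n : ℝ) := by
    intro n hn
    have hmin : min ⌊α * (n:ℝ)⌋₊ (n - 1) ≤ p n :=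
      min_le_min (le_max_right _ _) le_rfl
    have hfl : α * n - 1 < (⌊α * (n:ℝ)⌋₊ : ℝ) := by
      have := Nat.lt_floor_add_one (α * (n:ℝ)); linarith
    have hcast : ((n - 1 : ℕ) : ℝ) = (n : ℝ) - 1 := by
      have h1 : (1:ℕ) ≤ n := hn
      push_cast [h1]; ring
    have hαn : α * n ≤ (n : ℝ) := by
      nlinarith [Nat.cast_nonneg (α := ℝ) n]
    have hn1 : α * n - 1 ≤ ((n - 1 : ℕ) : ℝ) := by rw [hcast]; linarith
    calc α * n - 1 ≤ min ((⌊α * (n:ℝ)⌋₊ : ℝ)) (((n - 1 : ℕ) : ℝ)) := le_min hfl.le hn1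
      _ = ((min ⌊α * (n:ℝ)⌋₊ (n - 1) : ℕ) : ℝ) := by rw [Nat.cast_min]
      _ ≤ (p n : ℝ) := by exact_mod_cast hmin
  have hone : Tendsto (fun n : ℕ => (1:ℝ) / n) atTop (nhds 0) :=
    tendsto_one_div_atTop_nhds_zero_nat
  have hp : Tendsto (fun n : ℕ => (p n : ℝ) / n) atTop (nhds α) := by
    apply tendsto_of_tendsto_of_tendsto_of_le_of_le'
      (g := fun n : ℕ => α - 1 / (n:ℝ)) (h := fun n : ℕ => α + 1 / (n:ℝ))
    · simpa using tendsto_const_nhds.sub hone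
    · simpa using tendsto_const_nhds.add hone
    · filter_upwards [eventually_ge_atTop 1] with n hn
      have hn0 : (0:ℝ) < n := by exact_mod_cast hn
      have h := hp_lb n hn
      rw [show α - 1 / (n:ℝ) = (α * n - 1) / n by field_simp]
      exact (div_le_div_iff_of_pos_right hn0).mpr h
    · filter_upwards [eventually_ge_atTop 1] with n hn
      have hn0 : (0:ℝ) < n := by exact_mod_cast hn
      have h := hp_ub n
      rw [show α + 1 / (n:ℝ) = (α * n + 1) / n by field_simp]
      exact (div_le_div_iff_of_pos_right hn0).mpr h
  have hpn_le : ∀ n : ℕ, p n ≤ n :=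
    fun n => le_trans (min_le_right _ _) (Nat.sub_le n 1)
  have hs_def : ∀ n : ℕ, (s n : ℝ) = (n : ℝ) - (p n : ℝ) := by
    intro n
    have := hpn_le n
    exact Nat.cast_sub this
  have hs : Tendsto (fun n : ℕ => (s n : ℝ) / n) atTop (nhds (1 - α)) := by
    have h : Tendsto (fun n : ℕ => 1 - (p n : ℝ) / n) atTop (nhds (1 - α)) :=
      tendsto_const_nhds.sub hp
    apply h.congr'
    filter_upwards [eventually_ge_atTop 1] with n hn
    have hn0 : (n:ℝ) ≠ 0 := Nat.cast_ne_zero.mpr (by omega)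
    rw [hs_def n]
    field_simp
  -- structural facts
  have hp1 : ∀ n : ℕ, 2 ≤ n → 1 ≤ p n := by
    intro n hn
    exact le_min (le_max_left _ _) (by omega)
  have hs1 : ∀ n : ℕ, 2 ≤ n → 1 ≤ s n := by
    intro n hn
    have h : p n ≤ n - 1 := min_le_right _ _
    have : s n = n - p n := rfl
    omega
  have hM1 : ∀ n : ℕ, 2 ≤ n →
      1 ≤ s n * Nat.fib (2 * p n - 1) + 2 * Nat.fib (2 * p n) := by
    intro n hn
    have h1 := hp1 n hn
    have h2 : 0 < Nat.fib (2 * p n) := Nat.fib_pos.mpr (by omega)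
    omega
  -- component A
  have hA : Tendsto (fun n : ℕ => ((s n - 1 : ℕ) : ℝ) / n * Real.log 2) atTop
      (nhds ((1 - α) * Real.log 2)) := by
    apply Tendsto.mul_const
    have h := hs.sub hone
    rw [sub_zero] at h
    apply h.congr'
    filter_upwards [eventually_ge_atTop 2] with n hn
    have h1 := hs1 n hn
    have hc : ((s n - 1 : ℕ) : ℝ) = (s n : ℝ) - 1 := by
      push_cast [h1]; ring
    rw [hc]; ring
  have hq : Tendsto (fun n : ℕ => 2 * ((p n : ℝ) / n)) atTop (nhds (2 * α)) :=
    hp.const_mul 2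
  have hBlo : Tendsto (fun n : ℕ => (2 * ((p n : ℝ) / n) - 2 * (1 / n)) * Real.log φ) atTop
      (nhds ((2 * α) * Real.log φ)) := by
    have h := (hq.sub (hone.const_mul 2)).mul_const (Real.log φ)
    simpa using h
  have hlogn : Tendsto (fun n : ℕ => Real.log ((n:ℝ) + 2) / ((n:ℝ) + 2)) atTop (nhds 0) := by
    have h0 := Real.isLittleO_log_id_atTop.tendsto_div_nhds_zero
    have h1 : Tendsto (fun n : ℕ => (n:ℝ) + 2) atTop atTop :=
      tendsto_atTop_add_const_right _ 2 tendsto_natCast_atTop_atTop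
    have := h0.comp h1
    exact this
  have hratio : Tendsto (fun n : ℕ => ((n:ℝ) + 2) / n) atTop (nhds 1) := by
    have h : Tendsto (fun n : ℕ => (1:ℝ) + 2 * (1 / (n:ℝ))) atTop (nhds 1) := by
      have h2 : Tendsto (fun n : ℕ => (1:ℝ) + 2 * (1 / (n:ℝ))) atTop (nhds (1 + 2 * 0)) :=
        tendsto_const_nhds.add (hone.const_mul 2)
      simpa using h2
    apply h.congr'
    filter_upwards [eventually_ge_atTop 1] with n hn
    have hn0 : (n:ℝ) ≠ 0 := Nat.cast_ne_zero.mpr (by omega)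
    field_simp
  have hlogn2 : Tendsto (fun n : ℕ => Real.log ((n:ℝ) + 2) / n) atTop (nhds 0) := by
    have h := hlogn.mul hratio
    rw [zero_mul] at h
    apply h.congr'
    filter_upwards [eventually_ge_atTop 1] with n hn
    have hn0 : (n:ℝ) ≠ 0 := Nat.cast_ne_zero.mpr (by omega)
    have hn2 : (n:ℝ) + 2 ≠ 0 := by positivity
    field_simp
  have hBhi : Tendsto
      (fun n : ℕ => Real.log ((n:ℝ) + 2) / n + 2 * ((p n : ℝ) / n) * Real.log φ)
      atTop (nhds ((2 * α) * Real.log φ)) := by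
    have h := hlogn2.add (hq.mul_const (Real.log φ))
    simpa using h
  -- component B via squeeze
  have hB : Tendsto
      (fun n : ℕ => Real.log ((s n * Nat.fib (2 * p n - 1) + 2 * Nat.fib (2 * p n) : ℕ) : ℝ) / n)
      atTop (nhds ((2 * α) * Real.log φ)) := by
    apply tendsto_of_tendsto_of_tendsto_of_le_of_le' hBlo hBhi
    · filter_upwards [eventually_ge_atTop 2] with n hn
      have hn0 : (0:ℝ) < n := by exact_mod_cast (by omega : 0 < n)
      have hp1n := hp1 n hn
      have hfib : φ ^ (2 * p n - 2) ≤
          ((s n * Nat.fib (2 * p n - 1) + 2 * Nat.fib (2 * p n) : ℕ) : ℝ) := by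
        have e : (2 * p n - 2) + 2 = 2 * p n := by omega
        have h1 : goldenRatio ^ (2 * p n - 2) ≤ (Nat.fib ((2 * p n - 2) + 2) : ℝ) :=
          gold_pow_le_fib_aux _
        rw [e] at h1
        rw [hφg]
        refine h1.trans ?_
        have h3 : Nat.fib (2 * p n) ≤
            s n * Nat.fib (2 * p n - 1) + 2 * Nat.fib (2 * p n) := by omega
        exact_mod_cast h3
      have hlogM : ((2 * p n - 2 : ℕ) : ℝ) * Real.log φ ≤
          Real.log ((s n * Nat.fib (2 * p n - 1) + 2 * Nat.fib (2 * p n) : ℕ) : ℝ) := by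
        rw [← Real.log_pow]
        exact Real.log_le_log (by positivity) hfib
      have hc : ((2 * p n - 2 : ℕ) : ℝ) = 2 * (p n : ℝ) - 2 := by
        have h4 : 2 ≤ 2 * p n := by omega
        push_cast [h4]; ring
      rw [hc] at hlogM
      rw [show (2 * ((p n : ℝ) / n) - 2 * (1 / n)) * Real.log φ
          = ((2 * (p n : ℝ) - 2) * Real.log φ) / n by field_simp]
      exact (div_le_div_iff_of_pos_right hn0).mpr hlogM
    · filter_upwards [eventually_ge_atTop 2] with n hn
      have hn0 : (0:ℝ) < n := by exact_mod_cast (by omega : 0 < n)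
      have hp1n := hp1 n hn
      have hM := hM1 n hn
      have hMpos : (0:ℝ) <
          ((s n * Nat.fib (2 * p n - 1) + 2 * Nat.fib (2 * p n) : ℕ) : ℝ) := by
        exact_mod_cast (by omega : 0 < s n * Nat.fib (2 * p n - 1) + 2 * Nat.fib (2 * p n))
      have h1 : s n * Nat.fib (2 * p n - 1) + 2 * Nat.fib (2 * p n)
          ≤ (n + 2) * Nat.fib (2 * p n) := by
        have hs_le : s n ≤ n := Nat.sub_le _ _
        have hf : Nat.fib (2 * p n - 1) ≤ Nat.fib (2 * p n) := Nat.fib_mono (by omega)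
        calc s n * Nat.fib (2 * p n - 1) + 2 * Nat.fib (2 * p n)
            ≤ n * Nat.fib (2 * p n) + 2 * Nat.fib (2 * p n) :=
              Nat.add_le_add (Nat.mul_le_mul hs_le hf) le_rfl
          _ = (n + 2) * Nat.fib (2 * p n) := by ring
      have h2 : (Nat.fib (2 * p n) : ℝ) ≤ φ ^ (2 * p n) := by
        have e : (2 * p n - 1) + 1 = 2 * p n := by omega
        have h5 := fib_le_gold_pow_aux (2 * p n - 1)
        rw [e] at h5
        rw [hφg]
        refine h5.trans ?_
        exact pow_le_pow_right₀ (le_of_lt one_lt_goldenRatio) (by omega)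
      have hub : ((s n * Nat.fib (2 * p n - 1) + 2 * Nat.fib (2 * p n) : ℕ) : ℝ)
          ≤ ((n:ℝ) + 2) * φ ^ (2 * p n) := by
        calc ((s n * Nat.fib (2 * p n - 1) + 2 * Nat.fib (2 * p n) : ℕ) : ℝ)
            ≤ (((n + 2) * Nat.fib (2 * p n) : ℕ) : ℝ) := by exact_mod_cast h1
          _ = ((n:ℝ) + 2) * (Nat.fib (2 * p n) : ℝ) := by push_cast; ring
          _ ≤ ((n:ℝ) + 2) * φ ^ (2 * p n) := by
              apply mul_le_mul_of_nonneg_left h2 (by positivity)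
      have hlogM : Real.log ((s n * Nat.fib (2 * p n - 1) + 2 * Nat.fib (2 * p n) : ℕ) : ℝ)
          ≤ Real.log ((n:ℝ) + 2) + (2 * p n : ℕ) * Real.log φ := by
        calc Real.log ((s n * Nat.fib (2 * p n - 1) + 2 * Nat.fib (2 * p n) : ℕ) : ℝ)
            ≤ Real.log (((n:ℝ) + 2) * φ ^ (2 * p n)) := Real.log_le_log hMpos hub
          _ = Real.log ((n:ℝ) + 2) + Real.log (φ ^ (2 * p n)) :=
              Real.log_mul (by positivity) (by positivity)
          _ = Real.log ((n:ℝ) + 2) + (2 * p n : ℕ) * Real.log φ := by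
              rw [Real.log_pow]
      rw [show Real.log ((n:ℝ) + 2) / n + 2 * ((p n : ℝ) / n) * Real.log φ
          = (Real.log ((n:ℝ) + 2) + (2 * (p n : ℝ)) * Real.log φ) / n by field_simp]
      apply (div_le_div_iff_of_pos_right hn0).mpr
      have hc : ((2 * p n : ℕ) : ℝ) = 2 * (p n : ℝ) := by push_cast; ring
      rw [hc] at hlogM
      exact hlogM
  -- the log-limit
  have hL : Tendsto
      (fun n : ℕ => Real.log
        ((2 ^ (s n - 1) * (s n * Nat.fib (2 * p n - 1) + 2 * Nat.fib (2 * p n)) : ℕ) : ℝ) / n)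
      atTop (nhds (Real.log β)) := by
    rw [hlogβ]
    have h := hA.add hB
    apply h.congr'
    filter_upwards [eventually_ge_atTop 2] with n hn
    have hM := hM1 n hn
    have hMpos : (0:ℝ) <
        ((s n * Nat.fib (2 * p n - 1) + 2 * Nat.fib (2 * p n) : ℕ) : ℝ) := by
      exact_mod_cast (by omega : 0 < s n * Nat.fib (2 * p n - 1) + 2 * Nat.fib (2 * p n))
    have h2pow : (0:ℝ) < (2:ℝ) ^ (s n - 1) := by positivity
    have hcast : ((2 ^ (s n - 1) * (s n * Nat.fib (2 * p n - 1) + 2 * Nat.fib (2 * p n)) : ℕ) : ℝ)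
        = (2:ℝ) ^ (s n - 1) * ((s n * Nat.fib (2 * p n - 1) + 2 * Nat.fib (2 * p n) : ℕ) : ℝ) := by
      push_cast; ring
    rw [hcast, Real.log_mul (ne_of_gt h2pow) (ne_of_gt hMpos), Real.log_pow]
    ring
  -- conclude
  have hexp := (Real.continuous_exp.tendsto _).comp hL
  rw [Real.exp_log hβpos] at hexp
  apply hexp.congr'
  filter_upwards [eventually_ge_atTop 2] with n hn
  have hM := hM1 n hn
  have hTpos : (0:ℝ) <
      ((2 ^ (s n - 1) * (s n * Nat.fib (2 * p n - 1) + 2 * Nat.fib (2 * p n)) : ℕ) : ℝ) := by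
    have : 0 < 2 ^ (s n - 1) * (s n * Nat.fib (2 * p n - 1) + 2 * Nat.fib (2 * p n)) :=
      Nat.mul_pos (Nat.pow_pos (by omega)) (by omega)
    exact_mod_cast this
  simp only [Function.comp]
  rw [Real.rpow_def_of_pos hTpos, mul_one_div]
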